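/- Let C ⊆ 𝔽_q^m be a linear code of dimension n, and let S = {supp(c) : c ∈ C} ⊆ 2^{[m]} be the associated set system viewed as a code in {0,1}^m. Then CL(S) = n. -/

import Mathlib

namespace Paper

/-- A chain of length `ℓ` in a code `C ⊆ {0,1}^m`. -/
def HasChain {m : ℕ} (C : Set (Fin m → Bool)) (ℓ : ℕ) : Prop :=
  ∃ (a : Fin ℓ → Fin m) (c : Fin ℓ → (Fin m → Bool)),
    Function.Injective a ∧ Function.Injective c ∧ (∀ i, c i ∈ C) ∧
    (∀ i, c i (a i) = true) ∧ (∀ i j : Fin ℓ, i < j → c i (a j) = false)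

/-- The chain length of a code. -/
noncomputable def CL {m : ℕ} (C : Set (Fin m → Bool)) : ℕ := sSup {ℓ | HasChain C ℓ}

/-- The support of a code. -/
def Supp {m : ℕ} (C : Set (Fin m → Bool)) : Set (Fin m) := {i | ∃ c ∈ C, c i = true}

/-- Hamming weight. -/
def wt {m : ℕ} (c : Fin m → Bool) : ℕ := (Finset.univ.filter fun i => c i = true).card

open Classical in
/-- Zero out the coordinates outside `S`. -/
noncomputable def mask {m : ℕ} (S : Set (Fin m)) (c : Fin m → Bool) : Fin m → Bool :=
  fun i => if i ∈ S then c i else false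

/-- Restriction of a code to a coordinate set `S`. -/
noncomputable def restrict {m : ℕ} (C : Set (Fin m → Bool)) (S : Set (Fin m)) :
    Set (Fin m → Bool) := mask S '' C

/-- Non-redundancy of a code. -/
noncomputable def NRD {m : ℕ} (C : Set (Fin m → Bool)) : ℕ :=
  sSup {k | ∃ S : Finset (Fin m), S.card = k ∧
    ∀ j ∈ S, ∃ c ∈ C, c j = true ∧ ∀ i ∈ S, i ≠ j → c i = false}

/-- The density `Φ(C)` of a finite code. -/
noncomputable def density {m : ℕ} (C : Finset (Fin m → Bool)) : ℝ :=
  sInf {x : ℝ | ∃ C' : Finset (Fin m → Bool), C' ⊆ C ∧ C'.Nonempty ∧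
    1 ≤ CL (↑C' : Set (Fin m → Bool)) ∧
    x = (Supp (↑C' : Set (Fin m → Bool))).ncard / (CL (↑C' : Set (Fin m → Bool)) : ℝ)}



section Aux

open Module

open Module

variable {F : Type*} [Field F] [Fintype F] [DecidableEq F] {m : ℕ}

/-- support vector -/
def fsupp (c : Fin m → F) : Fin m → Bool := fun i => decide (c i ≠ 0)


omit [Fintype F] in
lemma fsupp_eq_true {c : Fin m → F} {i : Fin m} : fsupp c i = true ↔ c i ≠ 0 := by
  simp [fsupp]

omit [Fintype F] in
lemma fsupp_eq_false {c : Fin m → F} {i : Fin m} : fsupp c i = false ↔ c i = 0 := by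
  simp [fsupp]

lemma chain_le (C : Submodule F (Fin m → F)) {ℓ : ℕ}
    (h : HasChain (fsupp '' (C : Set (Fin m → F))) ℓ) : ℓ ≤ finrank F C := by
  obtain ⟨a, c, ha, hc, hmem, hdiag, hlt⟩ := h
  choose x hxC hxs using fun i => hmem i
  have hli : LinearIndependent F x := by
    rw [Fintype.linearIndependent_iff]
    intro g hg i
    induction i using (wellFounded_gt (α := Fin ℓ)).induction with
    | _ i IH =>
      have h0 : (∑ j, g j • x j) (a i) = 0 := by rw [hg]; rfl
      rw [Finset.sum_apply] at h0
      have h1 : ∑ j, g j * x j (a i) = 0 := by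
        simpa [Pi.smul_apply, smul_eq_mul] using h0
      rw [Finset.sum_eq_single i] at h1
      · have hne : x i (a i) ≠ 0 := by
          rw [← fsupp_eq_true, hxs]; exact hdiag i
        rcases mul_eq_zero.mp h1 with h | h
        · exact h
        · exact absurd h hne
      · intro j _ hji
        rcases lt_or_gt_of_ne hji with hlt' | hgt
        · have : x j (a i) = 0 := by
            rw [← fsupp_eq_false, hxs]; exact hlt j i hlt'
          rw [this, mul_zero]
        · rw [IH j hgt, zero_mul]
      · intro hni; exact absurd (Finset.mem_univ i) hni
  calc ℓ = Fintype.card (Fin ℓ) := (Fintype.card_fin ℓ).symm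
    _ = finrank F (Submodule.span F (Set.range x)) := (finrank_span_eq_card hli).symm
    _ ≤ finrank F C := Submodule.finrank_mono (Submodule.span_le.mpr
        (Set.range_subset_iff.mpr hxC))

lemma exists_chain (C : Submodule F (Fin m → F)) :
    HasChain (fsupp '' (C : Set (Fin m → F))) (finrank F C) := by
  generalize hn : finrank F C = n
  induction n generalizing C with
  | zero =>
    exact ⟨Fin.elim0, Fin.elim0, fun i => i.elim0, fun i => i.elim0,
      fun i => i.elim0, fun i => i.elim0, fun i j _ => i.elim0⟩
  | succ n IH =>
    -- find a nonzero codeword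
    have hCne : C ≠ ⊥ := by
      intro hbot
      rw [hbot, finrank_bot] at hn
      omega
    obtain ⟨x, hxC, hx0⟩ := Submodule.exists_mem_ne_zero_of_ne_bot hCne
    obtain ⟨a0, ha0⟩ : ∃ a0, x a0 ≠ 0 := by
      by_contra hall
      push_neg at hall
      exact hx0 (funext fun i => hall i)
    set C' : Submodule F (Fin m → F) :=
      C ⊓ LinearMap.ker (LinearMap.proj a0 (R := F) (φ := fun _ : Fin m => F)) with hC'
    have hC'le : C' ≤ C := inf_le_left
    have hC'rank : finrank F C' = n := by
      set f : C →ₗ[F] F :=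
        (LinearMap.proj a0 (R := F) (φ := fun _ : Fin m => F)).comp C.subtype with hf
      have hker : Submodule.map C.subtype (LinearMap.ker f) = C' := by
        rw [hf, LinearMap.ker_comp, Submodule.map_comap_subtype]
      have hrange : finrank F (LinearMap.range f) = 1 := by
        have hle : finrank F (LinearMap.range f) ≤ 1 := by
          simpa using (Submodule.finrank_le (LinearMap.range f))
        have hpos : 0 < finrank F (LinearMap.range f) := by
          rw [finrank_pos_iff]
          refine Submodule.nontrivial_iff_ne_bot.mpr ?_
          intro hb
          have hmem : f ⟨x, hxC⟩ ∈ LinearMap.range f := LinearMap.mem_range_self f _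
          rw [hb, Submodule.mem_bot] at hmem
          exact ha0 hmem
        omega
      have := LinearMap.finrank_range_add_finrank_ker f
      rw [hrange, hn] at this
      have h2 : finrank F (LinearMap.ker f) = n := by omega
      rw [← hker, Submodule.finrank_map_subtype_eq, h2]
    obtain ⟨a', c', ha', hc', hmem', hdiag', hlt'⟩ := IH C' hC'rank
    -- every chain word from C' vanishes at a0
    have hvan : ∀ i, c' i a0 = false := by
      intro i
      obtain ⟨y, hyC', hy⟩ := hmem' i
      have : y a0 = 0 := by
        have := hyC'.2
        simpa [LinearMap.mem_ker] using this
      rw [← hy, fsupp_eq_false]; exact this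
    refine ⟨Fin.snoc a' a0, Fin.snoc c' (fsupp x), ?_, ?_, ?_, ?_, ?_⟩
    · -- injectivity of a
      intro i j hij
      induction i using Fin.lastCases with
      | last =>
        induction j using Fin.lastCases with
        | last => rfl
        | cast j =>
          exfalso
          rw [Fin.snoc_last, Fin.snoc_castSucc] at hij
          have h1 : c' j (a' j) = true := hdiag' j
          rw [← hij] at h1
          rw [hvan j] at h1; exact Bool.false_ne_true h1
      | cast i =>
        induction j using Fin.lastCases with
        | last =>
          exfalso
          rw [Fin.snoc_last, Fin.snoc_castSucc] at hij
          have h1 : c' i (a' i) = true := hdiag' i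
          rw [hij] at h1
          rw [hvan i] at h1; exact Bool.false_ne_true h1
        | cast j =>
          rw [Fin.snoc_castSucc, Fin.snoc_castSucc] at hij
          exact congrArg Fin.castSucc (ha' hij)
    · -- injectivity of c
      intro i j hij
      induction i using Fin.lastCases with
      | last =>
        induction j using Fin.lastCases with
        | last => rfl
        | cast j =>
          exfalso
          rw [Fin.snoc_last, Fin.snoc_castSucc] at hij
          have h1 : fsupp x a0 = true := fsupp_eq_true.mpr ha0
          rw [hij, hvan j] at h1; exact Bool.false_ne_true h1
      | cast i =>
        induction j using Fin.lastCases with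
        | last =>
          exfalso
          rw [Fin.snoc_last, Fin.snoc_castSucc] at hij
          have h1 : fsupp x a0 = true := fsupp_eq_true.mpr ha0
          rw [← hij, hvan i] at h1; exact Bool.false_ne_true h1
        | cast j =>
          rw [Fin.snoc_castSucc, Fin.snoc_castSucc] at hij
          exact congrArg Fin.castSucc (hc' hij)
    · -- membership
      intro i
      induction i using Fin.lastCases with
      | last => rw [Fin.snoc_last]; exact ⟨x, hxC, rfl⟩
      | cast i =>
        rw [Fin.snoc_castSucc]
        exact Set.image_mono (f := fsupp) (by exact_mod_cast hC'le) (hmem' i)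
    · -- diagonal
      intro i
      induction i using Fin.lastCases with
      | last =>
        rw [Fin.snoc_last, Fin.snoc_last]
        exact fsupp_eq_true.mpr ha0
      | cast i =>
        rw [Fin.snoc_castSucc, Fin.snoc_castSucc]
        exact hdiag' i
    · -- strict upper triangular
      intro i j hij
      induction j using Fin.lastCases with
      | last =>
        induction i using Fin.lastCases with
        | last => exact absurd hij (lt_irrefl _)
        | cast i =>
          rw [Fin.snoc_last, Fin.snoc_castSucc]
          exact hvan i
      | cast j =>
        induction i using Fin.lastCases with
        | last =>
          exfalso
          exact absurd (hij.trans_le (Fin.le_last _)) (lt_irrefl _)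
        | cast i =>
          rw [Fin.snoc_castSucc, Fin.snoc_castSucc]
          exact hlt' i j (by simpa [Fin.castSucc_lt_castSucc_iff] using hij)

end Aux

/-- for a linear code `C ⊆ 𝔽_q^m` of dimension `n`, the chain length of
the set system of supports of codewords equals `n`. -/
theorem cl_linear_code_eq_dim (F : Type*) [Field F] [Fintype F] [DecidableEq F]
    (m n : ℕ) (C : Submodule F (Fin m → F)) (h : Module.finrank F C = n) :
    CL ((fun c : Fin m → F => fun i => decide (c i ≠ 0)) '' (C : Set (Fin m → F))) = n := by
  have hS : (fun c : Fin m → F => fun i => decide (c i ≠ 0)) '' (C : Set (Fin m → F))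
      = fsupp '' (C : Set (Fin m → F)) := rfl
  rw [hS]
  have hub : ∀ ℓ ∈ {ℓ | HasChain (fsupp '' (C : Set (Fin m → F))) ℓ}, ℓ ≤ n :=
    fun ℓ hℓ => h ▸ chain_le C hℓ
  have hmem : n ∈ {ℓ | HasChain (fsupp '' (C : Set (Fin m → F))) ℓ} := h ▸ exists_chain C
  exact le_antisymm (csSup_le ⟨n, hmem⟩ hub) (le_csSup ⟨n, hub⟩ hmem)
end Paper
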